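/- If the equilibrium is asymptotically stable at τ = 0 (all roots of P + Q have negative real parts) and the equation ω⁶ + a_F ω⁴ + b_F ω² + c_F = 0 has exactly one positive real root ω₀, then there exists τ₀ > 0 such that for all τ ∈ [0, τ₀) every root of P(λ) + e^{-λτ}Q(λ) = 0 has negative real part, and at τ = τ₀ there is a pair of purely imaginary roots ±iω₀; i.e., there is exactly one stability switch. -/

import Mathlib

open Complex Metric

private lemma root_bound_aux (p₀ p₁ p₂ q₀ q₁ q₂ : ℝ) (z e : ℂ) (he : ‖e‖ ≤ 1)
    (hroot : z^3 + (p₂:ℂ)*z^2 + (p₁:ℂ)*z + (p₀:ℂ) + e*((q₂:ℂ)*z^2 + (q₁:ℂ)*z + (q₀:ℂ)) = 0) :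
    ‖z‖ < 1 + (|p₂| + |p₁| + |p₀| + |q₂| + |q₁| + |q₀|) := by
  set C := |p₂| + |p₁| + |p₀| + |q₂| + |q₁| + |q₀| with hC
  by_contra hge
  push_neg at hge
  set M := ‖z‖ with hM
  have hCnn : 0 ≤ C := by positivity
  have hM1 : (1:ℝ) ≤ M := by linarith
  have heq : z^3 = -((p₂:ℂ)*z^2 + (p₁:ℂ)*z + (p₀:ℂ)) - e*((q₂:ℂ)*z^2 + (q₁:ℂ)*z + (q₀:ℂ)) := by
    linear_combination hroot
  have hb1 : ‖(p₂:ℂ)*z^2 + (p₁:ℂ)*z + (p₀:ℂ)‖ ≤ |p₂| * M^2 + |p₁| * M + |p₀| := by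
    refine le_trans norm_add₃_le (le_of_eq ?_)
    simp only [norm_mul, norm_pow, Complex.norm_real, Real.norm_eq_abs, hM]
  have hb2 : ‖(q₂:ℂ)*z^2 + (q₁:ℂ)*z + (q₀:ℂ)‖ ≤ |q₂| * M^2 + |q₁| * M + |q₀| := by
    refine le_trans norm_add₃_le (le_of_eq ?_)
    simp only [norm_mul, norm_pow, Complex.norm_real, Real.norm_eq_abs, hM]
  have hqnn : (0:ℝ) ≤ |q₂| * M^2 + |q₁| * M + |q₀| := by positivity
  have h3 : M^3 ≤ (|p₂| * M^2 + |p₁| * M + |p₀|) + ‖e‖ * (|q₂| * M^2 + |q₁| * M + |q₀|) := by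
    have h0 : ‖z^3‖ ≤ ‖(p₂:ℂ)*z^2 + (p₁:ℂ)*z + (p₀:ℂ)‖ + ‖e‖ * ‖(q₂:ℂ)*z^2 + (q₁:ℂ)*z + (q₀:ℂ)‖ := by
      rw [heq]
      refine le_trans (norm_sub_le _ _) ?_
      rw [norm_neg, norm_mul]
    rw [norm_pow] at h0
    have := mul_le_mul_of_nonneg_left hb2 (norm_nonneg e)
    linarith
  have h4 : M^3 ≤ (|p₂| + |q₂|) * M^2 + (|p₁| + |q₁|) * M + (|p₀| + |q₀|) := by
    have := mul_le_mul_of_nonneg_right he hqnn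
    nlinarith
  have hMM : M ≤ M^2 := by nlinarith
  have h5 : M^3 ≤ C * M^2 := by
    rw [hC]
    nlinarith [mul_le_mul_of_nonneg_left hMM (abs_nonneg p₁), mul_le_mul_of_nonneg_left hMM (abs_nonneg q₁),
      mul_le_mul_of_nonneg_left (le_trans hM1 hMM) (abs_nonneg p₀),
      mul_le_mul_of_nonneg_left (le_trans hM1 hMM) (abs_nonneg q₀)]
  nlinarith [mul_le_mul_of_nonneg_right hge (sq_nonneg M), sq_nonneg M]

private lemma exists_zero_near_aux (g : ℂ → ℂ) (hg : Differentiable ℂ g) (z₀ : ℂ) (r m : ℝ)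
    (hr : 0 < r) (hm : 0 < m) (hz₀ : ‖g z₀‖ < m)
    (hsphere : ∀ z ∈ Metric.sphere z₀ r, m ≤ ‖g z‖) :
    ∃ z ∈ Metric.closedBall z₀ r, g z = 0 := by
  by_contra hno
  push_neg at hno
  have hne : ∀ z ∈ Metric.closedBall z₀ r, g z ≠ 0 := hno
  have hcl : closure (Metric.ball z₀ r) = Metric.closedBall z₀ r := closure_ball z₀ hr.ne'
  have hdc : DiffContOnCl ℂ (fun z => (g z)⁻¹) (Metric.ball z₀ r) := by
    constructor
    · exact (hg.differentiableOn).inv (fun z hz => hne z (Metric.ball_subset_closedBall hz))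
    · rw [hcl]
      exact (hg.continuous.continuousOn).inv₀ hne
  have hfr : frontier (Metric.ball z₀ r) = Metric.sphere z₀ r := frontier_ball z₀ hr.ne'
  have hbd : ∀ z ∈ frontier (Metric.ball z₀ r), ‖(g z)⁻¹‖ ≤ m⁻¹ := by
    intro z hz
    rw [hfr] at hz
    rw [norm_inv]
    exact inv_anti₀ hm (hsphere z hz)
  have hmem : z₀ ∈ closure (Metric.ball z₀ r) := by
    rw [hcl]; exact Metric.mem_closedBall_self hr.le
  have := Complex.norm_le_of_forall_mem_frontier_norm_le Metric.isBounded_ball hdc hbd hmem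
  rw [norm_inv] at this
  have hgz : g z₀ ≠ 0 := hne z₀ (Metric.mem_closedBall_self hr.le)
  have hpos : 0 < ‖g z₀‖ := norm_pos_iff.mpr hgz
  have : m ≤ ‖g z₀‖ := by
    rwa [inv_le_inv₀ hpos hm] at this
  linarith

set_option maxHeartbeats 1000000 in
/-- If the system is stable at τ = 0 and the sextic has exactly one positive root ω₀,
then there is exactly one stability switch: a τ₀ > 0 with stability for τ ∈ [0, τ₀)
and purely imaginary roots ±iω₀ at τ = τ₀. -/
theorem single_stability_switch
    (p₀ p₁ p₂ q₀ q₁ q₂ : ℝ)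
    (aF bF cF : ℝ)
    (haF : aF = p₂ ^ 2 - q₂ ^ 2 - 2 * p₁)
    (hbF : bF = 2 * q₀ * q₂ - 2 * p₀ * p₂ - q₁ ^ 2 + p₁ ^ 2)
    (hcF : cF = p₀ ^ 2 - q₀ ^ 2)
    (P Q : ℂ → ℂ)
    (hP : ∀ z, P z = z ^ 3 + (p₂ : ℂ) * z ^ 2 + (p₁ : ℂ) * z + (p₀ : ℂ))
    (hQ : ∀ z, Q z = (q₂ : ℂ) * z ^ 2 + (q₁ : ℂ) * z + (q₀ : ℂ))
    (hstable0 : ∀ z : ℂ, P z + Q z = 0 → z.re < 0)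
    (hPQ : ∀ ω : ℝ, P (Complex.I * ω) + Q (Complex.I * ω) ≠ 0)
    (ω₀ : ℝ)
    (huniq : (0 < ω₀ ∧ ω₀ ^ 6 + aF * ω₀ ^ 4 + bF * ω₀ ^ 2 + cF = 0) ∧
      ∀ ω : ℝ, 0 < ω → ω ^ 6 + aF * ω ^ 4 + bF * ω ^ 2 + cF = 0 → ω = ω₀) :
    ∃ τ₀ : ℝ, 0 < τ₀ ∧
      (∀ τ : ℝ, 0 ≤ τ → τ < τ₀ →
        ∀ z : ℂ, P z + Complex.exp (-z * τ) * Q z = 0 → z.re < 0) ∧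
      P (Complex.I * ω₀) + Complex.exp (-(Complex.I * ω₀) * τ₀) * Q (Complex.I * ω₀) = 0 ∧
      P (-(Complex.I * ω₀)) + Complex.exp ((Complex.I * ω₀) * τ₀) * Q (-(Complex.I * ω₀)) = 0 := by
  obtain ⟨⟨hω₀pos, hω₀root⟩, huniq2⟩ := huniq
  obtain ⟨f, hf⟩ : ∃ x : ℝ → ℂ → ℂ, x = fun (τ : ℝ) (z : ℂ) =>
      P z + Complex.exp (-z * (τ:ℂ)) * Q z := ⟨_, rfl⟩
  have hfdef : ∀ (τ : ℝ) (z : ℂ), f τ z = P z + Complex.exp (-z * (τ:ℂ)) * Q z := by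
    intro τ z; rw [hf]
  -- sextic identity
  have hns : ∀ ω : ℝ, Complex.normSq (P (I * ω)) - Complex.normSq (Q (I * ω))
      = ω^6 + aF*ω^4 + bF*ω^2 + cF := by
    intro ω
    rw [hP, hQ, haF, hbF, hcF]
    simp [Complex.normSq_apply, Complex.add_re, Complex.add_im, Complex.mul_re, Complex.mul_im,
      pow_succ, Complex.I_re, Complex.I_im]
    ring
  have hnseq : Complex.normSq (P (I * ω₀)) = Complex.normSq (Q (I * ω₀)) := by
    have h := hns ω₀
    rw [hω₀root] at h
    linarith
  have hQ0 : Q (I * ω₀) ≠ 0 := by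
    intro h
    rw [h] at hnseq
    simp only [map_zero] at hnseq
    have hP0 : P (I * ω₀) = 0 := Complex.normSq_eq_zero.mp hnseq
    exact hPQ ω₀ (by rw [hP0, h, add_zero])
  have hP0ne : P (I * ω₀) ≠ 0 := by
    intro h
    rw [h] at hnseq
    simp only [map_zero] at hnseq
    exact hQ0 (Complex.normSq_eq_zero.mp hnseq.symm)
  have hfeq : ∀ (τ : ℝ) (z : ℂ), f τ z
      = z^3 + (p₂:ℂ)*z^2 + (p₁:ℂ)*z + (p₀:ℂ)
        + Complex.exp (-z * τ) * ((q₂:ℂ)*z^2 + (q₁:ℂ)*z + (q₀:ℂ)) := by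
    intro τ z; rw [hfdef, hP, hQ]
  have hdiff : ∀ τ : ℝ, Differentiable ℂ (f τ) := by
    intro τ
    have hfun : f τ = fun z : ℂ => z^3 + (p₂:ℂ)*z^2 + (p₁:ℂ)*z + (p₀:ℂ)
        + Complex.exp (-z * τ) * ((q₂:ℂ)*z^2 + (q₁:ℂ)*z + (q₀:ℂ)) := funext (hfeq τ)
    rw [hfun]
    fun_prop
  have hcont : Continuous (fun p : ℝ × ℂ => f p.1 p.2) := by
    have hfun : (fun p : ℝ × ℂ => f p.1 p.2) = fun p : ℝ × ℂ =>
        p.2^3 + (p₂:ℂ)*p.2^2 + (p₁:ℂ)*p.2 + (p₀:ℂ)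
        + Complex.exp (-p.2 * (p.1:ℂ)) * ((q₂:ℂ)*p.2^2 + (q₁:ℂ)*p.2 + (q₀:ℂ)) :=
      funext fun p => hfeq p.1 p.2
    rw [hfun]
    fun_prop
  obtain ⟨R, hR⟩ : ∃ x : ℝ, x = 1 + (|p₂| + |p₁| + |p₀| + |q₂| + |q₁| + |q₀|) := ⟨_, rfl⟩
  have hR1 : (1:ℝ) ≤ R := by
    rw [hR]
    have : (0:ℝ) ≤ |p₂| + |p₁| + |p₀| + |q₂| + |q₁| + |q₀| := by positivity
    linarith
  have hRbound : ∀ (τ : ℝ) (z : ℂ), 0 ≤ τ → 0 ≤ z.re → f τ z = 0 → ‖z‖ < R := by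
    intro τ z hτ hz hroot
    rw [hfeq] at hroot
    rw [hR]
    refine root_bound_aux p₀ p₁ p₂ q₀ q₁ q₂ z _ ?_ hroot
    rw [Complex.norm_exp]
    have hre : (-z * (τ:ℂ)).re = -(z.re * τ) := by simp [Complex.mul_re]
    rw [hre]
    exact Real.exp_le_one_iff.mpr (by nlinarith)
  obtain ⟨S, hS⟩ : ∃ x : Set ℝ, x = {τ : ℝ | 0 ≤ τ ∧ ∃ z : ℂ, 0 ≤ z.re ∧ f τ z = 0} := ⟨_, rfl⟩
  have hSmem : ∀ τ : ℝ, τ ∈ S ↔ (0 ≤ τ ∧ ∃ z : ℂ, 0 ≤ z.re ∧ f τ z = 0) := by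
    intro τ; rw [hS]; exact Iff.rfl
  -- S is nonempty
  have hSne : S.Nonempty := by
    obtain ⟨w₁, hw₁⟩ : ∃ x : ℂ, x = -P (I * ω₀) / Q (I * ω₀) := ⟨_, rfl⟩
    have hw₁ne : w₁ ≠ 0 := by
      rw [hw₁]
      exact div_ne_zero (neg_ne_zero.mpr hP0ne) hQ0
    have habs : ‖w₁‖ = 1 := by
      rw [hw₁, norm_div, norm_neg]
      rw [div_eq_one_iff_eq (by simpa using hQ0)]
      have h1 : ‖P (I * ω₀)‖ = Real.sqrt (Complex.normSq (P (I * ω₀))) :=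
        Complex.norm_def _
      have h2 : ‖Q (I * ω₀)‖ = Real.sqrt (Complex.normSq (Q (I * ω₀))) :=
        Complex.norm_def _
      rw [h1, h2, hnseq]
    obtain ⟨θ, hθdef⟩ : ∃ x : ℝ, x = (Complex.log w₁).im := ⟨_, rfl⟩
    have hθpi : θ ≤ Real.pi := by
      rw [hθdef, Complex.log_im]
      exact Complex.arg_le_pi _
    have hlog : Complex.log w₁ = (θ:ℂ) * I := by
      apply Complex.ext
      · simp [Complex.log_re, habs]
      · simp [hθdef]
    obtain ⟨τ₁, hτ₁⟩ : ∃ x : ℝ, x = (2 * Real.pi - θ) / ω₀ := ⟨_, rfl⟩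
    have hτ₁nn : 0 ≤ τ₁ := by
      rw [hτ₁]
      apply div_nonneg _ hω₀pos.le
      have := Real.pi_pos
      linarith
    have hexp : Complex.exp (-(I * (ω₀:ℂ)) * (τ₁:ℂ)) = w₁ := by
      have harg : -(I * (ω₀:ℂ)) * (τ₁:ℂ) = (θ:ℂ) * I - (2 * (Real.pi:ℂ)) * I := by
        have hω₀ne : (ω₀:ℂ) ≠ 0 := Complex.ofReal_ne_zero.mpr hω₀pos.ne'
        rw [hτ₁]
        push_cast
        field_simp
        ring
      rw [harg, Complex.exp_sub]
      have h2pi : Complex.exp (2 * (Real.pi:ℂ) * I) = 1 := by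
        simpa using Complex.exp_two_pi_mul_I
      rw [h2pi]
      rw [← hlog, Complex.exp_log hw₁ne]
      simp
    refine ⟨τ₁, (hSmem τ₁).mpr ⟨hτ₁nn, I * ω₀, by simp, ?_⟩⟩
    rw [hfdef, hexp, hw₁, div_mul_cancel₀ _ hQ0]
    ring
  have hSbdd : BddBelow S := ⟨0, fun τ hτ => ((hSmem τ).mp hτ).1⟩
  -- S is closed
  have hSclosed : IsClosed S := by
    apply IsSeqClosed.isClosed
    intro x τ hxS hxτ
    have hxS' : ∀ n, 0 ≤ x n ∧ ∃ z : ℂ, 0 ≤ z.re ∧ f (x n) z = 0 :=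
      fun n => (hSmem (x n)).mp (hxS n)
    choose hx0 zs hzre hzroot using hxS'
    have hzK : ∀ n, zs n ∈ Metric.closedBall (0:ℂ) R := by
      intro n
      rw [Metric.mem_closedBall, dist_zero_right]
      exact (hRbound (x n) (zs n) (hx0 n) (hzre n) (hzroot n)).le
    obtain ⟨z, hzK', φ, hφ, hzt⟩ := (isCompact_closedBall (0:ℂ) R).tendsto_subseq hzK
    have hxτ' : Filter.Tendsto (fun n => x (φ n)) Filter.atTop (nhds τ) :=
      hxτ.comp hφ.tendsto_atTop
    refine (hSmem τ).mpr
      ⟨le_of_tendsto_of_tendsto' tendsto_const_nhds hxτ (fun n => hx0 n), z, ?_, ?_⟩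
    · have hret : Filter.Tendsto (fun n => (zs (φ n)).re) Filter.atTop (nhds z.re) :=
        (Complex.continuous_re.tendsto z).comp hzt
      exact le_of_tendsto_of_tendsto' tendsto_const_nhds hret (fun n => hzre (φ n))
    · have hpair : Filter.Tendsto (fun n => ((x (φ n)), zs (φ n))) Filter.atTop (nhds (τ, z)) :=
        hxτ'.prodMk_nhds hzt
      have hlim : Filter.Tendsto (fun n => f (x (φ n)) (zs (φ n))) Filter.atTop
          (nhds (f τ z)) := (hcont.tendsto (τ, z)).comp hpair
      have hzero : Filter.Tendsto (fun n => f (x (φ n)) (zs (φ n))) Filter.atTop (nhds 0) := by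
        simp only [hzroot]
        exact tendsto_const_nhds
      exact tendsto_nhds_unique hlim hzero
  obtain ⟨τs, hτs⟩ : ∃ x : ℝ, x = sInf S := ⟨_, rfl⟩
  have htS : τs ∈ S := by rw [hτs]; exact hSclosed.csInf_mem hSne hSbdd
  obtain ⟨hτs0, zstar, hzsre, hzsroot⟩ := (hSmem τs).mp htS
  have hτslb : ∀ τ ∈ S, τs ≤ τ := by
    intro τ hτ
    rw [hτs]
    exact csInf_le hSbdd hτ
  have hτspos : 0 < τs := by
    rcases lt_or_eq_of_le hτs0 with h | h
    · exact h
    · exfalso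
      have hz : f 0 zstar = 0 := by rw [← h] at hzsroot; exact hzsroot
      rw [hfdef] at hz
      simp only [Complex.ofReal_zero, mul_zero, Complex.exp_zero, one_mul] at hz
      exact absurd (hstable0 zstar hz) (not_lt.mpr hzsre)
  -- the critical root is purely imaginary
  have hzsre0 : zstar.re = 0 := by
    by_contra hne0
    have hrepos : 0 < zstar.re := lt_of_le_of_ne hzsre (Ne.symm hne0)
    rcases ((hdiff τs).analyticAt zstar).eventually_eq_zero_or_eventually_ne_zero with hev | hev
    · have hev' : f τs =ᶠ[nhds zstar] 0 := hev.mono (fun x hx => by simpa using hx)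
      have hA : AnalyticOnNhd ℂ (f τs) Set.univ := fun z _ => (hdiff τs).analyticAt z
      have hEq := hA.eqOn_zero_of_preconnected_of_eventuallyEq_zero isPreconnected_univ
        (Set.mem_univ zstar) hev'
      have hz0 : f τs ((R+1 : ℝ):ℂ) = 0 := hEq (Set.mem_univ _)
      have hb := hRbound τs _ hτs0 (by simp; linarith) hz0
      rw [Complex.norm_real, Real.norm_eq_abs, _root_.abs_of_nonneg (by linarith)] at hb
      linarith
    · rw [eventually_nhdsWithin_iff] at hev
      obtain ⟨ε, hε, hball⟩ := Metric.eventually_nhds_iff.mp hev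
      obtain ⟨r, hrdef⟩ : ∃ x : ℝ, x = min (ε/2) (zstar.re/2) := ⟨_, rfl⟩
      have hrpos : 0 < r := by rw [hrdef]; exact lt_min (by linarith) (by linarith)
      have hrlt : r < zstar.re := by
        rw [hrdef]; exact lt_of_le_of_lt (min_le_right _ _) (by linarith)
      have hrε : r < ε := by
        rw [hrdef]; exact lt_of_le_of_lt (min_le_left _ _) (by linarith)
      have hsph_ne : ∀ z ∈ Metric.sphere zstar r, f τs z ≠ 0 := by
        intro z hz
        rw [Metric.mem_sphere] at hz
        refine hball (by rw [hz]; exact hrε) ?_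
        simp only [Set.mem_compl_iff, Set.mem_singleton_iff]
        intro hzz
        rw [hzz] at hz
        simp at hz
        linarith
      obtain ⟨w, hwmem, hwmin⟩ := (isCompact_sphere zstar r).exists_isMinOn
        (NormedSpace.sphere_nonempty.mpr hrpos.le)
        ((hdiff τs).continuous.norm.continuousOn)
      obtain ⟨m, hmdef⟩ : ∃ x : ℝ, x = ‖f τs w‖ := ⟨_, rfl⟩
      have hmpos : 0 < m := by rw [hmdef]; exact norm_pos_iff.mpr (hsph_ne w hwmem)
      have hcont2 : Continuous (fun p : ℝ × ℂ => f p.1 p.2 - f τs p.2) :=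
        hcont.sub (hcont.comp (continuous_const.prodMk continuous_snd))
      have hVopen : IsOpen {p : ℝ × ℂ | ‖f p.1 p.2 - f τs p.2‖ < m/2} :=
        isOpen_lt hcont2.norm continuous_const
      have hsub : ({τs} : Set ℝ) ×ˢ Metric.closedBall zstar r
          ⊆ {p : ℝ × ℂ | ‖f p.1 p.2 - f τs p.2‖ < m/2} := by
        rintro ⟨a, b⟩ ⟨ha, _⟩
        simp only [Set.mem_singleton_iff] at ha
        subst ha
        simp only [Set.mem_setOf_eq, sub_self, norm_zero]
        linarith
      obtain ⟨u, v, hu, hv, hτu, hKv, huv⟩ := generalized_tube_lemma isCompact_singleton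
        (isCompact_closedBall zstar r) hVopen hsub
      obtain ⟨δ, hδ, hδball⟩ := Metric.isOpen_iff.mp hu τs (hτu rfl)
      obtain ⟨d, hddef⟩ : ∃ x : ℝ, x = min (δ/2) (τs/2) := ⟨_, rfl⟩
      have hd1 : d ≤ δ/2 := by rw [hddef]; exact min_le_left _ _
      have hd2 : d ≤ τs/2 := by rw [hddef]; exact min_le_right _ _
      have hd0 : 0 < d := by rw [hddef]; exact lt_min (by linarith) (by linarith)
      obtain ⟨τ', hτ'def⟩ : ∃ x : ℝ, x = τs - d := ⟨_, rfl⟩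
      have hτ'lt : τ' < τs := by rw [hτ'def]; linarith
      have hτ'pos : 0 < τ' := by rw [hτ'def]; linarith
      have hτ'u : τ' ∈ u := by
        apply hδball
        rw [Metric.mem_ball, Real.dist_eq, hτ'def]
        rw [_root_.abs_of_nonpos (by linarith)]
        linarith
      have hclose : ∀ z ∈ Metric.closedBall zstar r, ‖f τ' z - f τs z‖ < m/2 := by
        intro z hz
        have hmem : ((τ', z) : ℝ × ℂ) ∈ u ×ˢ v := Set.mem_prod.mpr ⟨hτ'u, hKv hz⟩
        exact huv hmem
      have hz₀small : ‖f τ' zstar‖ < m/2 := by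
        have h := hclose zstar (Metric.mem_closedBall_self hrpos.le)
        rwa [hzsroot, sub_zero] at h
      have hsphlb : ∀ z ∈ Metric.sphere zstar r, m/2 ≤ ‖f τ' z‖ := by
        intro z hz
        have h1 := hclose z (Metric.sphere_subset_closedBall hz)
        have h2 : m ≤ ‖f τs z‖ := by rw [hmdef]; exact hwmin hz
        have h5 : ‖f τs z‖ - ‖f τ' z‖ ≤ ‖f τ' z - f τs z‖ := by
          have h6 := norm_sub_norm_le (f τs z) (f τ' z)
          rwa [norm_sub_rev] at h6
        linarith
      obtain ⟨z', hz'mem, hz'root⟩ := exists_zero_near_aux (f τ') (hdiff τ') zstar r (m/2)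
        hrpos (by linarith) hz₀small hsphlb
      have hz're : 0 ≤ z'.re := by
        have hd : dist z' zstar ≤ r := Metric.mem_closedBall.mp hz'mem
        rw [Complex.dist_eq] at hd
        have h1 := Complex.abs_re_le_norm (z' - zstar)
        have h2 : (z' - zstar).re = z'.re - zstar.re := by simp
        rw [h2] at h1
        have h3 : |z'.re - zstar.re| ≤ r := le_trans h1 hd
        have h4 := abs_le.mp h3
        linarith
      have hτ'S : τ' ∈ S := (hSmem τ').mpr ⟨hτ'pos.le, z', hz're, hz'root⟩
      have hle := hτslb τ' hτ'S
      linarith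
  -- final assembly
  obtain ⟨y, hydef⟩ : ∃ x : ℝ, x = zstar.im := ⟨_, rfl⟩
  have hzs_eq : zstar = I * (y:ℂ) := by
    apply Complex.ext <;> simp [hzsre0, hydef]
  have hroot_y : f τs (I * (y:ℂ)) = 0 := by rw [← hzs_eq]; exact hzsroot
  have hyne : y ≠ 0 := by
    intro h0
    rw [h0] at hroot_y
    rw [hfdef] at hroot_y
    simp only [Complex.ofReal_zero, mul_zero, neg_zero, zero_mul, Complex.exp_zero,
      one_mul] at hroot_y
    exact hPQ 0 (by simpa using hroot_y)
  have habs1 : ‖(Complex.exp (-(I * (y:ℂ)) * (τs:ℂ)))‖ = 1 := by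
    rw [Complex.norm_exp]
    have hre : ((-(I * (y:ℂ))) * (τs:ℂ)).re = 0 := by
      simp [Complex.mul_re, Complex.mul_im]
    rw [hre, Real.exp_zero]
  have hPeq : P (I*(y:ℂ)) = -(Complex.exp (-(I*(y:ℂ)) * (τs:ℂ)) * Q (I*(y:ℂ))) := by
    rw [hfdef] at hroot_y
    linear_combination hroot_y
  have hFy : y^6 + aF*y^4 + bF*y^2 + cF = 0 := by
    have h := hns y
    have heq2 : Complex.normSq (P (I*(y:ℂ))) = Complex.normSq (Q (I*(y:ℂ))) := by
      rw [hPeq, Complex.normSq_neg, Complex.normSq_mul, ← Complex.sq_norm, habs1]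
      ring
    rw [heq2] at h
    linarith
  have hconj : ∀ (τ : ℝ) (z : ℂ), f τ z = 0 → f τ ((starRingEnd ℂ) z) = 0 := by
    intro τ z hz
    have hcc : f τ ((starRingEnd ℂ) z) = (starRingEnd ℂ) (f τ z) := by
      rw [hfeq, hfeq]
      simp only [map_add, map_mul, map_pow, map_neg, ← Complex.exp_conj,
        Complex.conj_ofReal]
    rw [hcc, hz, map_zero]
  have hboth : f τs (I * (ω₀:ℂ)) = 0 ∧ f τs (-(I * (ω₀:ℂ))) = 0 := by
    rcases lt_or_gt_of_ne hyne with hneg | hpos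
    · have hFneg : (-y)^6 + aF*(-y)^4 + bF*(-y)^2 + cF = 0 := by linear_combination hFy
      have hyeq : -y = ω₀ := huniq2 (-y) (by linarith) hFneg
      have hy : y = -ω₀ := by linarith
      rw [hy] at hroot_y
      have h1 : f τs (-(I * (ω₀:ℂ))) = 0 := by
        have hI : I * ((-ω₀ : ℝ):ℂ) = -(I * (ω₀:ℂ)) := by push_cast; ring
        rwa [hI] at hroot_y
      have h2 := hconj τs _ h1
      have hcc : (starRingEnd ℂ) (-(I * (ω₀:ℂ))) = I * (ω₀:ℂ) := by
        rw [map_neg, map_mul, Complex.conj_ofReal, Complex.conj_I]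
        ring
      rw [hcc] at h2
      exact ⟨h2, h1⟩
    · have hyeq : y = ω₀ := huniq2 y hpos hFy
      rw [hyeq] at hroot_y
      have h2 := hconj τs _ hroot_y
      have hcc : (starRingEnd ℂ) (I * (ω₀:ℂ)) = -(I * (ω₀:ℂ)) := by
        rw [map_mul, Complex.conj_ofReal, Complex.conj_I]
        ring
      rw [hcc] at h2
      exact ⟨hroot_y, h2⟩
  refine ⟨τs, hτspos, ?_, ?_, ?_⟩
  · intro τ hτ0 hτlt z hroot
    by_contra hge
    push_neg at hge
    have hτS : τ ∈ S := (hSmem τ).mpr ⟨hτ0, z, hge, by rw [hfdef]; exact hroot⟩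
    have hle := hτslb τ hτS
    linarith
  · have h := hboth.1
    rw [hfdef] at h
    exact h
  · have h := hboth.2
    rw [hfdef] at h
    rw [neg_neg] at h
    exact h
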